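/- Let F be a field and β ∈ F with β ∉ {0, −1} and with f'(a,b) + β ≠ 0 for every Boolean assignment (a,b) ∈ {0,1}^{X∪Y} (this holds, e.g., when char F = 0 and β = 1, and when char F = p > 0 and β lies outside the prime subfield). Let g ∈ F[X,Y] be the unique multilinear polynomial agreeing with 1/(f' + β) on the Boolean hypercube. Then for every i ∈ [N], the family of coefficient polynomials {g_{m_S} : ∅ ≠ S ⊆ X_i} (where g = ∑_{S ⊆ X_i} m_S · g_{m_S} with m_S = ∏_{x∈S} x and g_{m_S} ∈ F[(X∖X_i) ∪ Y]) is algebraically independent over F; in particular alg-rank_{X_i}(g) ≥ n − 1. -/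

import Mathlib

open MvPolynomial

private lemma sum_two_pow_lt (ℓ : ℕ) : ∑ j ∈ Finset.range ℓ, 2 ^ j < 2 ^ ℓ := by
  induction ℓ with
  | zero => simp
  | succ k ih => rw [Finset.sum_range_succ, pow_succ]; omega

/-- The binary encoding `t(S) = ∑_{j ∈ S} 2^j` of a subset `S ⊆ [ℓ]`, as an element
of `Fin n` where `n = 2^ℓ`. -/
def tEnc {ℓ n : ℕ} (h : n = 2 ^ ℓ) (S : Finset (Fin ℓ)) : Fin n :=
  ⟨∑ j ∈ S, 2 ^ (j : ℕ), by
    subst h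
    calc ∑ j ∈ S, 2 ^ (j : ℕ)
        ≤ ∑ j : Fin ℓ, 2 ^ (j : ℕ) := Finset.sum_le_sum_of_subset (Finset.subset_univ S)
      _ = ∑ j ∈ Finset.range ℓ, 2 ^ j := Fin.sum_univ_eq_sum_range _ _
      _ < 2 ^ ℓ := sum_two_pow_lt ℓ⟩

/-- The polynomial `f' = ∑_{i=1}^{N} ∑_{S ⊆ X_i} (∏_{x ∈ S} x) · y_{t(S)}`.
The x-variables are indexed by pairs `(i, j) : Fin N × Fin ℓ` (block `i`, position `j`)
and the y-variables by `Fin n`. -/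
noncomputable def fPrime (F : Type*) [Field F] (N ℓ n : ℕ) (h : n = 2 ^ ℓ) :
    MvPolynomial ((Fin N × Fin ℓ) ⊕ Fin n) F :=
  ∑ i : Fin N, ∑ S ∈ (Finset.univ : Finset (Fin ℓ)).powerset,
    (∏ j ∈ S, X (Sum.inl (i, j))) * X (Sum.inr (tEnc h S))

/-- Partial evaluation of `g` obtained by substituting, for the variables of block `i`,
the characteristic vector of `A ⊆ X_i`, and leaving every other variable alone. -/
noncomputable def partialEvalBlock {F : Type*} [Field F] {N ℓ n : ℕ}
    (g : MvPolynomial ((Fin N × Fin ℓ) ⊕ Fin n) F) (i : Fin N) (A : Finset (Fin ℓ)) :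
    MvPolynomial ((Fin N × Fin ℓ) ⊕ Fin n) F :=
  aeval (fun v => match v with
    | Sum.inl p => if p.1 = i then (if p.2 ∈ A then 1 else 0) else X (Sum.inl p)
    | Sum.inr k => X (Sum.inr k)) g

/-- For a multilinear `g`, the coefficient polynomial `g_{m_S}` of the monomial
`m_S = ∏_{j ∈ S} x_{i,j}` in the decomposition `g = ∑_{S ⊆ X_i} m_S · g_{m_S}`,
recovered by Möbius inversion over partial Boolean evaluations of block `i`. -/
noncomputable def coeffPolyBlock {F : Type*} [Field F] {N ℓ n : ℕ}
    (g : MvPolynomial ((Fin N × Fin ℓ) ⊕ Fin n) F) (i : Fin N) (S : Finset (Fin ℓ)) :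
    MvPolynomial ((Fin N × Fin ℓ) ⊕ Fin n) F :=
  ∑ A ∈ S.powerset, ((-1 : F) ^ ((S \ A).card)) • partialEvalBlock g i A

namespace AlgIndepAux

variable {F : Type*} [Field F] {σ : Type*}



lemma mdeg_single (v : σ) (k : ℕ) : Finsupp.degree (Finsupp.single v k) = k := by
  classical
  rcases eq_or_ne k 0 with rfl | hk
  · simp
  · rw [Finsupp.degree_apply, Finsupp.support_single_ne_zero _ hk, Finset.sum_singleton,
      Finsupp.single_eq_same]

lemma mdeg_add (a b : σ →₀ ℕ) :
    Finsupp.degree (a + b) = Finsupp.degree a + Finsupp.degree b := by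
  simp only [Finsupp.degree_eq_weight_one]
  exact map_add _ _ _

lemma mdeg_sum {α : Type*} (s : Finset α) (f : α → (σ →₀ ℕ)) :
    Finsupp.degree (∑ x ∈ s, f x) = ∑ x ∈ s, Finsupp.degree (f x) := by
  simp only [Finsupp.degree_eq_weight_one]
  exact map_sum _ _ _

lemma mdeg_eq_one (m : σ →₀ ℕ) (h : Finsupp.degree m = 1) :
    ∃ v, m = Finsupp.single v 1 := by
  classical
  have hne : m ≠ 0 := by
    intro h0; rw [h0] at h; simp at h
  have hsupp : m.support.Nonempty := Finsupp.support_nonempty_iff.mpr hne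
  obtain ⟨v, hv⟩ := hsupp
  have hcard : m.support.card ≤ 1 := by
    have := Finset.card_nsmul_le_sum m.support m 1 (fun a ha => Nat.one_le_iff_ne_zero.mpr
      (Finsupp.mem_support_iff.mp ha))
    simpa [Finsupp.degree] using this.trans_eq h
  have hs : m.support = {v} := by
    apply Finset.eq_singleton_iff_unique_mem.mpr
    exact ⟨hv, fun w hw => Finset.card_le_one.mp hcard w hw v hv⟩
  have hm : m = Finsupp.single v (m v) := Finsupp.support_subset_singleton.mp (hs.le)
  have : m v = 1 := by
    rw [Finsupp.degree_apply, hs, Finset.sum_singleton] at h; exact h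
  rw [this] at hm; exact ⟨v, hm⟩

/-- All monomials of `q` have degree at least `k`. -/
def MinDeg (k : ℕ) (q : MvPolynomial σ F) : Prop :=
  ∀ m ∈ q.support, k ≤ Finsupp.degree m

lemma minDeg_zero (k : ℕ) : MinDeg k (0 : MvPolynomial σ F) := by
  intro m hm; simp at hm

lemma minDeg_mono {j k : ℕ} {q : MvPolynomial σ F} (h : MinDeg k q) (hjk : j ≤ k) :
    MinDeg j q := fun m hm => hjk.trans (h m hm)

lemma minDeg_add {k : ℕ} {q₁ q₂ : MvPolynomial σ F} (h₁ : MinDeg k q₁) (h₂ : MinDeg k q₂) :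
    MinDeg k (q₁ + q₂) := by
  classical
  intro m hm
  rcases Finset.mem_union.mp (MvPolynomial.support_add hm) with h | h
  · exact h₁ m h
  · exact h₂ m h

lemma minDeg_monomial (m₀ : σ →₀ ℕ) (c : F) : MinDeg (Finsupp.degree m₀) (monomial m₀ c) := by
  classical
  intro m hm
  have := MvPolynomial.support_monomial_subset hm
  rw [Finset.mem_singleton] at this
  subst this; exact le_rfl

lemma minDeg_mul {a b : ℕ} {q₁ q₂ : MvPolynomial σ F} (h₁ : MinDeg a q₁) (h₂ : MinDeg b q₂) :
    MinDeg (a + b) (q₁ * q₂) := by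
  classical
  intro m hm
  obtain ⟨m₁, hm₁, m₂, hm₂, rfl⟩ := Finset.mem_add.mp (MvPolynomial.support_mul q₁ q₂ hm)
  rw [mdeg_add]
  exact add_le_add (h₁ m₁ hm₁) (h₂ m₂ hm₂)

lemma minDeg_coeff {k : ℕ} {q : MvPolynomial σ F} (h : MinDeg k q) {m : σ →₀ ℕ}
    (hm : Finsupp.degree m < k) : coeff m q = 0 := by
  by_contra hc
  exact absurd (h m (MvPolynomial.mem_support_iff.mpr hc)) (not_le.mpr hm)



lemma degreeOf_monomial_le (v : σ) (m : σ →₀ ℕ) (c : F) :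
    degreeOf v (monomial m c) ≤ m v := by
  classical
  rw [MvPolynomial.degreeOf_le_iff]
  intro d hd
  have := MvPolynomial.support_monomial_subset hd
  rw [Finset.mem_singleton] at this
  subst this; exact le_rfl

lemma degreeOf_sum_le' (v : σ) {α : Type*} (s : Finset α) (f : α → MvPolynomial σ F) (k : ℕ)
    (h : ∀ x ∈ s, degreeOf v (f x) ≤ k) : degreeOf v (∑ x ∈ s, f x) ≤ k := by
  classical
  induction s using Finset.induction_on with
  | empty => simp
  | insert a s hx ih =>
    rw [Finset.sum_insert hx]
    refine le_trans (MvPolynomial.degreeOf_add_le _ _ _) ?_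
    exact max_le (h a (Finset.mem_insert_self a s))
      (ih fun x hxs => h x (Finset.mem_insert_of_mem hxs))

lemma degreeOf_prod_le (v : σ) {α : Type*} (s : Finset α) (f : α → MvPolynomial σ F)
    (b : α → ℕ) (h : ∀ x ∈ s, degreeOf v (f x) ≤ b x) :
    degreeOf v (∏ x ∈ s, f x) ≤ ∑ x ∈ s, b x := by
  classical
  induction s using Finset.induction_on with
  | empty =>
    rw [Finset.prod_empty, Finset.sum_empty, ← C_1, degreeOf_C]
  | insert a s hx ih =>
    rw [Finset.prod_insert hx, Finset.sum_insert hx]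
    refine le_trans (MvPolynomial.degreeOf_mul_le _ _ _) ?_
    exact add_le_add (h a (Finset.mem_insert_self a s))
      (ih fun x hxs => h x (Finset.mem_insert_of_mem hxs))

/-- Substituting constants or the variables themselves preserves multilinearity. -/
lemma degreeOf_subst_le [DecidableEq σ] (g : MvPolynomial σ F) (σf : σ → MvPolynomial σ F)
    (hσ : ∀ w, σf w = X w ∨ ∃ c, σf w = C c) (v : σ) (hg : g.degreeOf v ≤ 1) :
    (aeval σf g).degreeOf v ≤ 1 := by
  conv_lhs => rw [g.as_sum]
  rw [map_sum]
  apply degreeOf_sum_le'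
  intro α hα
  rw [aeval_monomial]
  refine le_trans (MvPolynomial.degreeOf_mul_le _ _ _) ?_
  have h1 : degreeOf v (algebraMap F (MvPolynomial σ F) (coeff α g)) = 0 := by
    rw [MvPolynomial.algebraMap_eq]; exact degreeOf_C _ _
  rw [h1, zero_add]
  have h2 : degreeOf v (α.prod fun i k => σf i ^ k) ≤
      ∑ w ∈ α.support, (if w = v then α w else 0) := by
    rw [Finsupp.prod]
    apply degreeOf_prod_le
    intro w _
    rcases hσ w with hw | ⟨c, hw⟩
    · rw [hw, MvPolynomial.X_pow_eq_monomial]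
      refine le_trans (degreeOf_monomial_le _ _ _) ?_
      rw [Finsupp.single_apply]
    · rw [hw, ← MvPolynomial.C_pow, degreeOf_C]
      exact Nat.zero_le _
  refine h2.trans ?_
  rw [Finset.sum_ite_eq' α.support v (fun w => α w)]
  split
  · exact MvPolynomial.degreeOf_le_iff.mp hg α hα
  · exact Nat.zero_le _

lemma eval_zero_point (p : MvPolynomial σ F) : eval (fun _ => (0 : F)) p = coeff 0 p := by
  rw [MvPolynomial.eval_zero', constantCoeff_eq]

/-- Evaluation at an indicator point of a single variable, for a polynomial that is
multilinear in that variable. -/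
lemma eval_single_point [DecidableEq σ] (p : MvPolynomial σ F) (v : σ)
    (h : p.degreeOf v ≤ 1) :
    eval (fun w => if w = v then (1 : F) else 0) p
      = coeff 0 p + coeff (Finsupp.single v 1) p := by
  rw [eval_eq]
  have key : ∀ d : σ →₀ ℕ,
      (∏ i ∈ d.support, (if i = v then (1:F) else 0) ^ d i)
        = if d.support ⊆ {v} then 1 else 0 := by
    intro d
    by_cases hsub : d.support ⊆ {v}
    · rw [if_pos hsub]
      apply Finset.prod_eq_one
      intro i hi
      have hiv : i = v := Finset.mem_singleton.mp (hsub hi)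
      simp [hiv]
    · rw [if_neg hsub]
      obtain ⟨i, hi, hiv⟩ : ∃ i ∈ d.support, i ≠ v := by
        by_contra hc
        push_neg at hc
        exact hsub fun i hi => Finset.mem_singleton.mpr (hc i hi)
      apply Finset.prod_eq_zero hi
      rw [if_neg hiv]
      exact zero_pow (Finsupp.mem_support_iff.mp hi)
  simp_rw [key, mul_ite, mul_one, mul_zero]
  set f : (σ →₀ ℕ) → F := fun d => if d.support ⊆ {v} then coeff d p else 0 with hf
  have hne : (0 : σ →₀ ℕ) ≠ Finsupp.single v 1 :=
    fun hc => one_ne_zero (Finsupp.single_eq_zero.mp hc.symm)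
  have e1 : ∑ d ∈ p.support, f d = ∑ d ∈ p.support ∪ {0, Finsupp.single v 1}, f d := by
    apply Finset.sum_subset Finset.subset_union_left
    intro d _ hd
    rw [hf]
    simp only [MvPolynomial.notMem_support_iff.mp hd, if_neg, ite_self]
  have e2 : ∑ d ∈ ({0, Finsupp.single v 1} : Finset (σ →₀ ℕ)), f d
      = ∑ d ∈ p.support ∪ {0, Finsupp.single v 1}, f d := by
    apply Finset.sum_subset Finset.subset_union_right
    intro d hd hdpair
    rw [hf]
    simp only
    rw [if_neg]
    intro hsub
    have hdsupp : d ∈ p.support := (Finset.mem_union.mp hd).resolve_right hdpair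
    have hd1 : d = Finsupp.single v (d v) := Finsupp.support_subset_singleton.mp hsub
    have hdv : d v ≤ 1 := MvPolynomial.degreeOf_le_iff.mp h d hdsupp
    rcases Nat.le_one_iff_eq_zero_or_eq_one.mp hdv with h0 | h01
    · rw [h0, Finsupp.single_zero] at hd1
      exact hdpair (by rw [hd1]; exact Finset.mem_insert_self _ _)
    · rw [h01] at hd1
      exact hdpair (by rw [hd1]; exact Finset.mem_insert_of_mem (Finset.mem_singleton_self _))
  have h0s : ((0 : σ →₀ ℕ)).support ⊆ ({v} : Finset σ) := by simp
  have h1s : (Finsupp.single v 1).support ⊆ ({v} : Finset σ) := by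
    rw [Finsupp.support_single_ne_zero v one_ne_zero]
  rw [e1, ← e2, Finset.sum_pair hne, hf]
  simp only
  rw [if_pos h0s, if_pos h1s]



lemma alt_sum_powerset {γ : Type*} [DecidableEq γ] (S : Finset γ) :
    ∑ A ∈ S.powerset, (-1 : F) ^ A.card = if S = ∅ then 1 else 0 := by
  have h := Finset.sum_powerset_neg_one_pow_card (x := S)
  rcases eq_or_ne S ∅ with rfl | hS
  · simp
  · rw [if_neg hS] at h ⊢
    exact_mod_cast congrArg (Int.cast : ℤ → F) h

/-- The key Möbius sum: `∑_{A ⊆ S} (-1)^{|S∖A|} [U ⊆ A] = [U = S]`. -/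
lemma mobius_sum {γ : Type*} [DecidableEq γ] (S U : Finset γ) :
    ∑ A ∈ S.powerset, (-1 : F) ^ ((S \ A).card) * (if U ⊆ A then 1 else 0)
      = if U = S then 1 else 0 := by
  -- reindex A ↦ S \ A
  rw [show ∑ A ∈ S.powerset, (-1 : F) ^ ((S \ A).card) * (if U ⊆ A then 1 else 0)
      = ∑ B ∈ S.powerset, (-1 : F) ^ B.card * (if U ⊆ S \ B then 1 else 0) from
    Finset.sum_nbij' (fun A => S \ A) (fun B => S \ B)
      (fun A hA => Finset.mem_powerset.mpr (Finset.sdiff_subset))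
      (fun B hB => Finset.mem_powerset.mpr (Finset.sdiff_subset))
      (fun A hA => Finset.sdiff_sdiff_eq_self (Finset.mem_powerset.mp hA))
      (fun B hB => Finset.sdiff_sdiff_eq_self (Finset.mem_powerset.mp hB))
      (fun A hA => by rw [Finset.sdiff_sdiff_eq_self (Finset.mem_powerset.mp hA)])]
  by_cases hUS : U ⊆ S
  · have key : ∀ B ∈ S.powerset,
        (-1 : F) ^ B.card * (if U ⊆ S \ B then 1 else 0)
          = if B ∈ (S \ U).powerset then (-1 : F) ^ B.card else 0 := by
      intro B hB
      have hBS : B ⊆ S := Finset.mem_powerset.mp hB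
      have : (U ⊆ S \ B) ↔ (B ⊆ S \ U) := by
        rw [Finset.subset_sdiff, Finset.subset_sdiff]
        constructor
        · rintro ⟨_, hd⟩; exact ⟨hBS, hd.symm⟩
        · rintro ⟨_, hd⟩; exact ⟨hUS, hd.symm⟩
      simp only [Finset.mem_powerset]
      by_cases hc : B ⊆ S \ U
      · rw [if_pos (this.mpr hc), if_pos hc, mul_one]
      · rw [if_neg (fun hu => hc (this.mp hu)), if_neg hc, mul_zero]
    rw [Finset.sum_congr rfl key]
    rw [← Finset.sum_filter]
    have hfil : (S.powerset.filter (· ∈ (S \ U).powerset)) = (S \ U).powerset := by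
      apply Finset.ext
      intro B
      simp only [Finset.mem_filter, Finset.mem_powerset]
      exact ⟨fun h => h.2, fun h => ⟨h.trans (Finset.sdiff_subset), h⟩⟩
    rw [hfil, alt_sum_powerset]
    have : (S \ U = ∅) ↔ (U = S) := by
      rw [Finset.sdiff_eq_empty_iff_subset]
      exact ⟨fun h => le_antisymm hUS h, fun h => h.ge⟩
    simp only [this]
  · have key : ∀ B ∈ S.powerset,
        (-1 : F) ^ B.card * (if U ⊆ S \ B then 1 else 0) = 0 := by
      intro B _
      rw [if_neg (fun hu => hUS (hu.trans (Finset.sdiff_subset))), mul_zero]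
    rw [Finset.sum_congr rfl key, Finset.sum_const_zero]
    rw [if_neg (fun h : U = S => hUS h.le)]

lemma alt_sum_sdiff {γ : Type*} [DecidableEq γ] (S : Finset γ) (hS : S.Nonempty) :
    ∑ A ∈ S.powerset, (-1 : F) ^ ((S \ A).card) = 0 := by
  have := mobius_sum (F := F) S ∅
  simp only [Finset.empty_subset, if_pos, mul_one] at this
  rw [this, if_neg]
  exact fun h => (hS.ne_empty h.symm)

private lemma sum_two_pow_lt' (ℓ : ℕ) : ∑ j ∈ Finset.range ℓ, 2 ^ j < 2 ^ ℓ := by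
  induction ℓ with
  | zero => simp
  | succ k ih => rw [Finset.sum_range_succ, pow_succ]; omega


def tEnc {ℓ n : ℕ} (h : n = 2 ^ ℓ) (S : Finset (Fin ℓ)) : Fin n :=
  ⟨∑ j ∈ S, 2 ^ (j : ℕ), by
    subst h
    calc ∑ j ∈ S, 2 ^ (j : ℕ)
        ≤ ∑ j : Fin ℓ, 2 ^ (j : ℕ) := Finset.sum_le_sum_of_subset (Finset.subset_univ S)
      _ = ∑ j ∈ Finset.range ℓ, 2 ^ j := Fin.sum_univ_eq_sum_range _ _
      _ < 2 ^ ℓ := sum_two_pow_lt' ℓ⟩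


lemma tEnc_injective {ℓ n : ℕ} (h : n = 2 ^ ℓ) : Function.Injective (tEnc h) := by
  intro S T hST
  have hsum : ∑ j ∈ S, 2 ^ (j : ℕ) = ∑ j ∈ T, 2 ^ (j : ℕ) := congrArg Fin.val hST
  have himg : ∑ j ∈ S.image (Fin.val), 2 ^ j = ∑ j ∈ T.image (Fin.val), 2 ^ j := by
    rw [Finset.sum_image (fun a _ b _ hab => Fin.val_injective hab),
      Finset.sum_image (fun a _ b _ hab => Fin.val_injective hab)]
    exact hsum
  have := congrArg (fun m => Nat.bitIndices m |>.toFinset) himg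
  simp only [Finset.toFinset_bitIndices_twoPowSum] at this
  exact Finset.image_injective Fin.val_injective this


end AlgIndepAux

namespace AlgIndepAux

variable {F : Type*} [Field F] {ℓ N n : ℕ}

lemma prod_indicator {γ : Type*} [DecidableEq γ] (U A : Finset γ) :
    ∏ j ∈ U, (if j ∈ A then (1:F) else 0) = if U ⊆ A then 1 else 0 := by
  by_cases h : U ⊆ A
  · rw [if_pos h]
    exact Finset.prod_eq_one fun j hj => if_pos (h hj)
  · rw [if_neg h]
    obtain ⟨j, hjU, hjA⟩ := Finset.not_subset.mp h
    exact Finset.prod_eq_zero hjU (if_neg hjA)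

lemma eval_fPrime_y_zero (hn : n = 2 ^ ℓ) (xa : Fin N × Fin ℓ → F) :
    eval (Sum.elim xa fun _ => (0:F)) (fPrime F N ℓ n hn) = 0 := by
  rw [fPrime, map_sum]
  apply Finset.sum_eq_zero; intro i' _
  rw [map_sum]
  apply Finset.sum_eq_zero; intro T _
  rw [eval_mul, eval_X]
  simp

lemma eval_fPrime_single (hn : n = 2 ^ ℓ) (i : Fin N) (A U : Finset (Fin ℓ)) :
    eval (Sum.elim
        (fun p : Fin N × Fin ℓ => if p.1 = i then (if p.2 ∈ A then (1:F) else 0) else 0)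
        (fun k => if k = tEnc hn U then (1:F) else 0)) (fPrime F N ℓ n hn)
      = (if U ⊆ A then 1 else 0)
        + ((Finset.univ.erase i).card : F) * (if U = ∅ then 1 else 0) := by
  classical
  set xa : Fin N × Fin ℓ → F :=
    fun p => if p.1 = i then (if p.2 ∈ A then (1:F) else 0) else 0 with hxa
  rw [fPrime, map_sum]
  have step : ∀ i' : Fin N,
      (eval (Sum.elim xa fun k => if k = tEnc hn U then (1:F) else 0))
        (∑ T ∈ (Finset.univ : Finset (Fin ℓ)).powerset,
          (∏ j ∈ T, X (Sum.inl (i', j))) * X (Sum.inr (tEnc hn T)))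
        = ∏ j ∈ U, xa (i', j) := by
    intro i'
    rw [map_sum]
    have term : ∀ T ∈ (Finset.univ : Finset (Fin ℓ)).powerset,
        (eval (Sum.elim xa fun k => if k = tEnc hn U then (1:F) else 0))
          ((∏ j ∈ T, X (Sum.inl (i', j))) * X (Sum.inr (tEnc hn T)))
          = if T = U then ∏ j ∈ T, xa (i', j) else 0 := by
      intro T _
      rw [eval_mul, eval_prod, eval_X]
      simp only [Sum.elim_inr, (tEnc_injective hn).eq_iff]
      simp only [eval_X, Sum.elim_inl]
      rw [mul_ite, mul_one, mul_zero]
    rw [Finset.sum_congr rfl term, Finset.sum_ite_eq' _ U _]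
    rw [if_pos (Finset.mem_powerset.mpr (Finset.subset_univ U))]
  refine (Finset.sum_congr rfl fun i' _ => step i').trans ?_
  rw [← Finset.add_sum_erase _ _ (Finset.mem_univ i)]
  congr 1
  · -- block i
    have : ∀ j ∈ U, xa (i, j) = if j ∈ A then (1:F) else 0 := by
      intro j _; rw [hxa]; simp
    rw [Finset.prod_congr rfl this, prod_indicator]
  · -- other blocks
    have : ∀ i' ∈ Finset.univ.erase i, (∏ j ∈ U, xa (i', j)) = if U = ∅ then (1:F) else 0 := by
      intro i' hi'
      have hne : i' ≠ i := Finset.ne_of_mem_erase hi'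
      have hz : ∀ j ∈ U, xa (i', j) = 0 := by
        intro j _; rw [hxa]; simp [hne]
      rw [Finset.prod_congr rfl hz, Finset.prod_const]
      rcases eq_or_ne U ∅ with rfl | hU
      · simp
      · rw [if_neg hU, zero_pow (by simpa [Finset.card_eq_zero] using hU)]
    rw [Finset.sum_congr rfl this, Finset.sum_const, nsmul_eq_mul]

/-- The substitution used in `partialEvalBlock`. -/
noncomputable def subf (i : Fin N) (A : Finset (Fin ℓ)) :
    ((Fin N × Fin ℓ) ⊕ Fin n) → MvPolynomial ((Fin N × Fin ℓ) ⊕ Fin n) F := fun v =>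
  match v with
  | Sum.inl p => if p.1 = i then (if p.2 ∈ A then 1 else 0) else X (Sum.inl p)
  | Sum.inr k => X (Sum.inr k)

lemma partialEvalBlock_eq (g : MvPolynomial ((Fin N × Fin ℓ) ⊕ Fin n) F) (i : Fin N)
    (A : Finset (Fin ℓ)) : partialEvalBlock g i A = aeval (subf i A) g := by
  rw [partialEvalBlock]
  refine congrArg (fun sfn : ((Fin N × Fin ℓ) ⊕ Fin n) → MvPolynomial ((Fin N × Fin ℓ) ⊕ Fin n) F =>
    (aeval sfn) g) ?_
  funext v
  cases v <;> rfl

lemma subf_cases (i : Fin N) (A : Finset (Fin ℓ)) :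
    ∀ w, subf (F := F) (n := n) i A w = X w ∨ ∃ c, subf (F := F) (n := n) i A w = C c := by
  intro w
  cases w with
  | inl p =>
    by_cases hp : p.1 = i
    · right
      refine ⟨if p.2 ∈ A then 1 else 0, ?_⟩
      rw [subf]
      simp only [if_pos hp]
      split <;> simp
    · left; rw [subf]; simp [hp]
  | inr k => left; rfl

lemma eval_partialEvalBlock (g : MvPolynomial ((Fin N × Fin ℓ) ⊕ Fin n) F) (i : Fin N)
    (A : Finset (Fin ℓ)) (x₀ : ((Fin N × Fin ℓ) ⊕ Fin n) → F) :
    eval x₀ (partialEvalBlock g i A)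
      = eval (fun w => eval x₀ (subf i A w)) g := by
  rw [partialEvalBlock_eq, aeval_def, MvPolynomial.algebraMap_eq, MvPolynomial.eval_eval₂]
  have hid : (eval x₀).comp (C : F →+* MvPolynomial ((Fin N × Fin ℓ) ⊕ Fin n) F)
      = RingHom.id F := RingHom.ext fun r => by simp
  rw [hid, eval₂_id]

end AlgIndepAux
namespace AlgIndepAux

variable {F : Type*} [Field F] {ℓ N n : ℕ}

lemma comp_zero (i : Fin N) (A : Finset (Fin ℓ)) :
    (fun w => eval (fun _ => (0:F)) (subf (n := n) i A w))
      = Sum.elim (fun p : Fin N × Fin ℓ => if p.1 = i then (if p.2 ∈ A then (1:F) else 0) else 0)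
          (fun _ => 0) := by
  funext w
  cases w with
  | inl p =>
    by_cases hp : p.1 = i
    · simp only [subf, Sum.elim_inl, if_pos hp]
      split <;> simp
    · simp only [subf, Sum.elim_inl, if_neg hp, eval_X]
  | inr k => simp [subf]

lemma comp_inl (i : Fin N) (A : Finset (Fin ℓ)) (u : Fin N × Fin ℓ) :
    (fun w => eval (fun w' : (Fin N × Fin ℓ) ⊕ Fin n =>
        if w' = Sum.inl u then (1:F) else 0) (subf (n := n) i A w))
      = Sum.elim (fun p : Fin N × Fin ℓ => if p.1 = i then (if p.2 ∈ A then (1:F) else 0)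
            else (if p = u then 1 else 0)) (fun _ => 0) := by
  funext w
  cases w with
  | inl p =>
    by_cases hp : p.1 = i
    · simp only [subf, Sum.elim_inl, if_pos hp]
      split <;> simp
    · simp only [subf, Sum.elim_inl, if_neg hp, eval_X, Sum.inl.injEq]
  | inr k => simp [subf]

lemma comp_inr (i : Fin N) (A : Finset (Fin ℓ)) (k : Fin n) :
    (fun w => eval (fun w' : (Fin N × Fin ℓ) ⊕ Fin n =>
        if w' = Sum.inr k then (1:F) else 0) (subf (n := n) i A w))
      = Sum.elim (fun p : Fin N × Fin ℓ => if p.1 = i then (if p.2 ∈ A then (1:F) else 0) else 0)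
          (fun k' => if k' = k then 1 else 0) := by
  funext w
  cases w with
  | inl p =>
    by_cases hp : p.1 = i
    · simp only [subf, Sum.elim_inl, if_pos hp]
      split <;> simp
    · simp only [subf, Sum.elim_inl, if_neg hp, eval_X]
      simp
  | inr k' => simp [subf]

section WithG

variable {β : F}
variable {g : MvPolynomial ((Fin N × Fin ℓ) ⊕ Fin n) F} {i : Fin N}

lemma boolean_elim (xa : Fin N × Fin ℓ → F) (ya : Fin n → F)
    (hx : ∀ p, xa p = 0 ∨ xa p = 1) (hy : ∀ k, ya k = 0 ∨ ya k = 1) :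
    ∀ v : (Fin N × Fin ℓ) ⊕ Fin n, Sum.elim xa ya v = 0 ∨ Sum.elim xa ya v = 1 := by
  intro v; cases v with
  | inl p => exact hx p
  | inr k => exact hy k

lemma eval_g_y_zero (hn : n = 2 ^ ℓ)
    (hg : ∀ a : ((Fin N × Fin ℓ) ⊕ Fin n) → F, (∀ v, a v = 0 ∨ a v = 1) →
        eval a g * (eval a (fPrime F N ℓ n hn) + β) = 1)
    (xa : Fin N × Fin ℓ → F) (hx : ∀ p, xa p = 0 ∨ xa p = 1) :
    eval (Sum.elim xa fun _ => (0:F)) g = β⁻¹ := by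
  have hb := boolean_elim (n := n) xa (fun _ => (0:F)) hx (fun _ => Or.inl rfl)
  have := eq_inv_of_mul_eq_one_left (hg _ hb)
  rw [this, eval_fPrime_y_zero hn, zero_add]

lemma coeff_zero_partial (hn : n = 2 ^ ℓ)
    (hg : ∀ a : ((Fin N × Fin ℓ) ⊕ Fin n) → F, (∀ v, a v = 0 ∨ a v = 1) →
        eval a g * (eval a (fPrime F N ℓ n hn) + β) = 1)
    (A : Finset (Fin ℓ)) :
    coeff 0 (partialEvalBlock g i A) = β⁻¹ := by
  rw [← eval_zero_point, eval_partialEvalBlock, comp_zero]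
  apply eval_g_y_zero hn hg
  intro p
  by_cases hp : p.1 = i
  · rw [if_pos hp]; split
    · exact Or.inr rfl
    · exact Or.inl rfl
  · rw [if_neg hp]; exact Or.inl rfl

lemma coeff_single_partial_inl (hn : n = 2 ^ ℓ)
    (hgml : ∀ v, g.degreeOf v ≤ 1)
    (hg : ∀ a : ((Fin N × Fin ℓ) ⊕ Fin n) → F, (∀ v, a v = 0 ∨ a v = 1) →
        eval a g * (eval a (fPrime F N ℓ n hn) + β) = 1)
    (A : Finset (Fin ℓ)) (u : Fin N × Fin ℓ) :
    coeff (Finsupp.single (Sum.inl u : (Fin N × Fin ℓ) ⊕ Fin n) 1)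
      (partialEvalBlock g i A) = 0 := by
  have hml : degreeOf (Sum.inl u : (Fin N × Fin ℓ) ⊕ Fin n) (partialEvalBlock g i A) ≤ 1 := by
    rw [partialEvalBlock_eq]
    exact degreeOf_subst_le g _ (subf_cases i A) _ (hgml _)
  have h := eval_single_point (partialEvalBlock g i A) (Sum.inl u) hml
  rw [eval_partialEvalBlock, comp_inl] at h
  rw [eval_g_y_zero hn hg, coeff_zero_partial hn hg] at h
  · linear_combination -h
  · intro p
    by_cases hp : p.1 = i
    · rw [if_pos hp]; split
      · exact Or.inr rfl
      · exact Or.inl rfl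
    · rw [if_neg hp]; split
      · exact Or.inr rfl
      · exact Or.inl rfl

lemma coeff_single_partial_inr (hn : n = 2 ^ ℓ)
    (hgml : ∀ v, g.degreeOf v ≤ 1)
    (hg : ∀ a : ((Fin N × Fin ℓ) ⊕ Fin n) → F, (∀ v, a v = 0 ∨ a v = 1) →
        eval a g * (eval a (fPrime F N ℓ n hn) + β) = 1)
    (A : Finset (Fin ℓ)) (U : Finset (Fin ℓ)) :
    coeff (Finsupp.single (Sum.inr (tEnc hn U) : (Fin N × Fin ℓ) ⊕ Fin n) 1)
      (partialEvalBlock g i A)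
      = ((if U ⊆ A then 1 else 0)
          + (((Finset.univ : Finset (Fin N)).erase i).card : F) * (if U = ∅ then 1 else 0)
          + β)⁻¹ - β⁻¹ := by
  have hml : degreeOf (Sum.inr (tEnc hn U) : (Fin N × Fin ℓ) ⊕ Fin n)
      (partialEvalBlock g i A) ≤ 1 := by
    rw [partialEvalBlock_eq]
    exact degreeOf_subst_le g _ (subf_cases i A) _ (hgml _)
  have h := eval_single_point (partialEvalBlock g i A) (Sum.inr (tEnc hn U)) hml
  rw [eval_partialEvalBlock, comp_inr] at h
  have hb := boolean_elim (n := n)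
      (fun p : Fin N × Fin ℓ => if p.1 = i then (if p.2 ∈ A then (1:F) else 0) else 0)
      (fun k' => if k' = tEnc hn U then 1 else 0)
      (fun p => by
        by_cases hp : p.1 = i
        · rw [if_pos hp]; split
          · exact Or.inr rfl
          · exact Or.inl rfl
        · rw [if_neg hp]; exact Or.inl rfl)
      (fun k' => by
        split
        · exact Or.inr rfl
        · exact Or.inl rfl)
  have hval := eq_inv_of_mul_eq_one_left (hg _ hb)
  rw [hval, eval_fPrime_single hn i A U, coeff_zero_partial hn hg] at h
  linear_combination -h

end WithG

end AlgIndepAux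
namespace AlgIndepAux

variable {F : Type*} [Field F] {ℓ N n : ℕ}

lemma tEnc_surjective (hn : n = 2 ^ ℓ) : Function.Surjective (tEnc hn) := by
  have hcard : Fintype.card (Finset (Fin ℓ)) = Fintype.card (Fin n) := by
    simp [Fintype.card_finset, hn]
  exact ((Fintype.bijective_iff_injective_and_card _).mpr
    ⟨tEnc_injective hn, hcard⟩).surjective

section CPB

variable {β : F}
variable {g : MvPolynomial ((Fin N × Fin ℓ) ⊕ Fin n) F} {i : Fin N}

lemma coeff_zero_cpb (hn : n = 2 ^ ℓ)
    (hg : ∀ a : ((Fin N × Fin ℓ) ⊕ Fin n) → F, (∀ v, a v = 0 ∨ a v = 1) →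
        eval a g * (eval a (fPrime F N ℓ n hn) + β) = 1)
    (S : Finset (Fin ℓ)) (hS : S.Nonempty) :
    coeff 0 (coeffPolyBlock g i S) = 0 := by
  rw [coeffPolyBlock, MvPolynomial.coeff_sum]
  have hterm : ∀ A ∈ S.powerset,
      coeff 0 ((-1:F)^((S\A).card) • partialEvalBlock g i A)
        = (-1:F)^((S\A).card) * β⁻¹ := by
    intro A _
    rw [MvPolynomial.coeff_smul, coeff_zero_partial hn hg, smul_eq_mul]
  rw [Finset.sum_congr rfl hterm, ← Finset.sum_mul, alt_sum_sdiff S hS, zero_mul]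

lemma coeff_single_cpb (hn : n = 2 ^ ℓ)
    (hgml : ∀ v, g.degreeOf v ≤ 1)
    (hg : ∀ a : ((Fin N × Fin ℓ) ⊕ Fin n) → F, (∀ v, a v = 0 ∨ a v = 1) →
        eval a g * (eval a (fPrime F N ℓ n hn) + β) = 1)
    (S : Finset (Fin ℓ)) (hS : S.Nonempty) (v : (Fin N × Fin ℓ) ⊕ Fin n) :
    coeff (Finsupp.single v 1) (coeffPolyBlock g i S)
      = if v = Sum.inr (tEnc hn S) then (1+β)⁻¹ - β⁻¹ else 0 := by
  rw [coeffPolyBlock, MvPolynomial.coeff_sum]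
  cases v with
  | inl u =>
    have hterm : ∀ A ∈ S.powerset,
        coeff (Finsupp.single (Sum.inl u : (Fin N × Fin ℓ) ⊕ Fin n) 1)
          ((-1:F)^((S\A).card) • partialEvalBlock g i A) = 0 := by
      intro A _
      rw [MvPolynomial.coeff_smul, coeff_single_partial_inl hn hgml hg, smul_zero]
    rw [Finset.sum_congr rfl hterm, Finset.sum_const_zero, if_neg (by simp)]
  | inr k =>
    obtain ⟨U, rfl⟩ := tEnc_surjective hn k
    rcases eq_or_ne U ∅ with rfl | hU
    · have hterm : ∀ A ∈ S.powerset,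
          coeff (Finsupp.single (Sum.inr (tEnc hn ∅) : (Fin N × Fin ℓ) ⊕ Fin n) 1)
            ((-1:F)^((S\A).card) • partialEvalBlock g i A)
            = (-1:F)^((S\A).card)
              * ((1 + (((Finset.univ : Finset (Fin N)).erase i).card : F) * 1 + β)⁻¹ - β⁻¹) := by
        intro A _
        rw [MvPolynomial.coeff_smul, coeff_single_partial_inr hn hgml hg, smul_eq_mul,
          if_pos (Finset.empty_subset A), if_pos rfl]
      rw [Finset.sum_congr rfl hterm, ← Finset.sum_mul, alt_sum_sdiff S hS, zero_mul]
      rw [if_neg]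
      intro hc
      have : (∅ : Finset (Fin ℓ)) = S := tEnc_injective hn (Sum.inr_injective hc)
      exact hS.ne_empty this.symm
    · have hterm : ∀ A ∈ S.powerset,
          coeff (Finsupp.single (Sum.inr (tEnc hn U) : (Fin N × Fin ℓ) ⊕ Fin n) 1)
            ((-1:F)^((S\A).card) • partialEvalBlock g i A)
            = ((1+β)⁻¹ - β⁻¹) * ((-1:F)^((S\A).card) * (if U ⊆ A then 1 else 0)) := by
        intro A _
        rw [MvPolynomial.coeff_smul, coeff_single_partial_inr hn hgml hg, smul_eq_mul,
          if_neg hU, mul_zero, add_zero]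
        have hv : ((if U ⊆ A then (1:F) else 0) + β)⁻¹ - β⁻¹
            = ((1+β)⁻¹ - β⁻¹) * (if U ⊆ A then 1 else 0) := by
          by_cases hUA : U ⊆ A
          · rw [if_pos hUA, mul_one]
          · rw [if_neg hUA, mul_zero, zero_add, sub_self]
        rw [hv]; ring
      rw [Finset.sum_congr rfl hterm, ← Finset.mul_sum, mobius_sum S U]
      simp only [Sum.inr.injEq, (tEnc_injective hn).eq_iff]
      rw [mul_ite, mul_one, mul_zero]

end CPB

section Decomp

variable {σ' ι' : Type*}

lemma pow_decomp (τv : σ') (cβ : F) (p r : MvPolynomial σ' F)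
    (hp : p = monomial (Finsupp.single τv 1) cβ + r) (hr : MinDeg 2 r) :
    ∀ k : ℕ, ∃ E, p ^ k = monomial (Finsupp.single τv k) (cβ ^ k) + E ∧ MinDeg (k+1) E := by
  intro k
  induction k with
  | zero => exact ⟨0, by simp, minDeg_zero 1⟩
  | succ k ih =>
    obtain ⟨E, hE, hEmin⟩ := ih
    have hMk : MinDeg (F := F) k (monomial (Finsupp.single τv k) (cβ^k)) := by
      have := minDeg_monomial (Finsupp.single τv k) (cβ^k)
      rwa [mdeg_single] at this
    have hM1 : MinDeg (F := F) 1 (monomial (Finsupp.single τv 1) cβ) := by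
      have := minDeg_monomial (Finsupp.single τv 1) cβ
      rwa [mdeg_single] at this
    refine ⟨monomial (Finsupp.single τv k) (cβ^k) * r
        + E * monomial (Finsupp.single τv 1) cβ + E * r, ?_, ?_⟩
    · have hmm : (monomial (Finsupp.single τv k) (cβ^k))
          * (monomial (Finsupp.single τv 1) cβ)
          = monomial (Finsupp.single τv (k+1)) (cβ^(k+1)) := by
        rw [MvPolynomial.monomial_mul, ← Finsupp.single_add, pow_succ]
      calc p ^ (k+1) = (monomial (Finsupp.single τv k) (cβ^k) + E)
            * (monomial (Finsupp.single τv 1) cβ + r) := by rw [pow_succ, hE, hp]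
        _ = (monomial (Finsupp.single τv k) (cβ^k)) * (monomial (Finsupp.single τv 1) cβ)
            + (monomial (Finsupp.single τv k) (cβ^k) * r
              + E * monomial (Finsupp.single τv 1) cβ + E * r) := by ring
        _ = _ := by rw [hmm]
    · apply minDeg_add
      apply minDeg_add
      · exact minDeg_mono (minDeg_mul hMk hr) (by omega)
      · exact minDeg_mono (minDeg_mul hEmin hM1) (by omega)
      · exact minDeg_mono (minDeg_mul hEmin hr) (by omega)

lemma prod_decomp (τ : ι' → σ') (cβ : F) (p : ι' → MvPolynomial σ' F)
    (hp : ∀ S, ∃ rr, p S = monomial (Finsupp.single (τ S) 1) cβ + rr ∧ MinDeg 2 rr)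
    (s : Finset ι') (e : ι' → ℕ) :
    ∃ E, ∏ S ∈ s, p S ^ e S
        = monomial (∑ S ∈ s, Finsupp.single (τ S) (e S)) (cβ ^ (∑ S ∈ s, e S)) + E
        ∧ MinDeg ((∑ S ∈ s, e S) + 1) E := by
  classical
  induction s using Finset.induction_on with
  | empty => exact ⟨0, by simp, minDeg_zero 1⟩
  | insert a s hx ih =>
    obtain ⟨E₂, hE₂, hE₂min⟩ := ih
    obtain ⟨rr, hprr, hrrmin⟩ := hp a
    obtain ⟨E₁, hE₁, hE₁min⟩ := pow_decomp (τ a) cβ (p a) rr hprr hrrmin (e a)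
    have hM1 : MinDeg (F := F) (e a) (monomial (Finsupp.single (τ a) (e a)) (cβ ^ e a)) := by
      have := minDeg_monomial (Finsupp.single (τ a) (e a)) (cβ ^ e a)
      rwa [mdeg_single] at this
    have hM2 : MinDeg (F := F) (∑ S ∈ s, e S)
        (monomial (∑ S ∈ s, Finsupp.single (τ S) (e S)) (cβ ^ (∑ S ∈ s, e S))) := by
      have := minDeg_monomial (∑ S ∈ s, Finsupp.single (τ S) (e S)) (cβ ^ (∑ S ∈ s, e S))
      rwa [mdeg_sum, Finset.sum_congr rfl (fun S _ => mdeg_single (τ S) (e S))] at this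
    refine ⟨monomial (Finsupp.single (τ a) (e a)) (cβ ^ e a) * E₂
        + E₁ * monomial (∑ S ∈ s, Finsupp.single (τ S) (e S)) (cβ ^ (∑ S ∈ s, e S))
        + E₁ * E₂, ?_, ?_⟩
    · have hmm : (monomial (Finsupp.single (τ a) (e a)) (cβ ^ e a))
          * (monomial (∑ S ∈ s, Finsupp.single (τ S) (e S)) (cβ ^ (∑ S ∈ s, e S)))
          = monomial (∑ S ∈ insert a s, Finsupp.single (τ S) (e S))
              (cβ ^ (∑ S ∈ insert a s, e S)) := by
        rw [MvPolynomial.monomial_mul, Finset.sum_insert hx, Finset.sum_insert hx, pow_add]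
      calc ∏ S ∈ insert a s, p S ^ e S
          = (p a ^ e a) * ∏ S ∈ s, p S ^ e S := Finset.prod_insert hx
        _ = (monomial (Finsupp.single (τ a) (e a)) (cβ ^ e a) + E₁)
            * (monomial (∑ S ∈ s, Finsupp.single (τ S) (e S)) (cβ ^ (∑ S ∈ s, e S)) + E₂) := by
            rw [hE₁, hE₂]
        _ = (monomial (Finsupp.single (τ a) (e a)) (cβ ^ e a))
              * (monomial (∑ S ∈ s, Finsupp.single (τ S) (e S)) (cβ ^ (∑ S ∈ s, e S)))
            + (monomial (Finsupp.single (τ a) (e a)) (cβ ^ e a) * E₂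
              + E₁ * monomial (∑ S ∈ s, Finsupp.single (τ S) (e S)) (cβ ^ (∑ S ∈ s, e S))
              + E₁ * E₂) := by ring
        _ = _ := by rw [hmm]
    · rw [Finset.sum_insert hx]
      apply minDeg_add
      apply minDeg_add
      · exact minDeg_mono (minDeg_mul hM1 hE₂min) (by omega)
      · exact minDeg_mono (minDeg_mul hE₁min hM2) (by omega)
      · exact minDeg_mono (minDeg_mul hE₁min hE₂min) (by omega)

lemma aeval_ne_zero_of_linear [DecidableEq σ'] (τ : ι' → σ') (hτ : Function.Injective τ)
    (cβ : F) (hcβ : cβ ≠ 0) (p : ι' → MvPolynomial σ' F)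
    (h0 : ∀ S, coeff 0 (p S) = 0)
    (h1 : ∀ S v, coeff (Finsupp.single v 1) (p S) = if v = τ S then cβ else 0)
    (Q : MvPolynomial ι' F) (hQ : Q ≠ 0) : aeval p Q ≠ 0 := by
  classical
  set r : ι' → MvPolynomial σ' F :=
    fun S => p S - monomial (Finsupp.single (τ S) 1) cβ with hrdef
  have hp' : ∀ S, p S = monomial (Finsupp.single (τ S) 1) cβ + r S := by
    intro S; rw [hrdef]; dsimp only; ring
  have hr : ∀ S, MinDeg 2 (r S) := by
    intro S m hm
    by_contra hlt
    push_neg at hlt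
    have hdm : Finsupp.degree m = 0 ∨ Finsupp.degree m = 1 := by omega
    have hc0 : coeff m (r S) = 0 := by
      rcases hdm with hd | hd
      · have hm0 : m = 0 := (Finsupp.degree_eq_zero_iff m).mp hd
        subst hm0
        rw [hrdef]
        dsimp only
        rw [MvPolynomial.coeff_sub, h0 S, MvPolynomial.coeff_monomial,
          if_neg (fun hc : Finsupp.single (τ S) 1 = 0 =>
            one_ne_zero (Finsupp.single_eq_zero.mp hc))]
        ring
      · obtain ⟨v, rfl⟩ := mdeg_eq_one m hd
        rw [hrdef]
        dsimp only
        rw [MvPolynomial.coeff_sub, h1 S, MvPolynomial.coeff_monomial]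
        by_cases hv : v = τ S
        · rw [if_pos hv, if_pos (by rw [hv]), sub_self]
        · rw [if_neg hv, if_neg (fun hc =>
            hv ((Finsupp.single_left_inj one_ne_zero).mp hc).symm), sub_self]
    exact MvPolynomial.mem_support_iff.mp hm hc0
  obtain ⟨α₀, hα₀Q, hmin⟩ := Finset.exists_min_image Q.support Finsupp.degree
    (by rwa [Finset.nonempty_iff_ne_empty, Ne, MvPolynomial.support_eq_empty])
  intro hzero
  have hexp : aeval p Q = ∑ α ∈ Q.support, C (coeff α Q) * ∏ S ∈ α.support, p S ^ α S := by
    rw [aeval_def, MvPolynomial.algebraMap_eq, eval₂_eq]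
  set m₀ := Finsupp.mapDomain τ α₀ with hm₀
  have hdm₀ : Finsupp.degree m₀ = Finsupp.degree α₀ := by
    rw [hm₀, Finsupp.mapDomain, Finsupp.sum, mdeg_sum]
    rw [Finset.sum_congr rfl (fun S _ => mdeg_single (τ S) (α₀ S))]
    rfl
  have hterm : ∀ α ∈ Q.support,
      coeff m₀ (C (coeff α Q) * ∏ S ∈ α.support, p S ^ α S)
        = if α = α₀ then coeff α₀ Q * cβ ^ (Finsupp.degree α₀) else 0 := by
    intro α hα
    obtain ⟨E, hE, hEmin⟩ := prod_decomp τ cβ p (fun S => ⟨r S, hp' S, hr S⟩) α.support α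
    have hse : ∑ S ∈ α.support, α S = Finsupp.degree α := rfl
    rw [MvPolynomial.coeff_C_mul, hE, MvPolynomial.coeff_add]
    have hcE : coeff m₀ E = 0 := by
      apply minDeg_coeff hEmin
      rw [hdm₀, hse]
      have := hmin α hα
      omega
    rw [hcE, add_zero, MvPolynomial.coeff_monomial]
    have hmap : (∑ S ∈ α.support, Finsupp.single (τ S) (α S)) = Finsupp.mapDomain τ α := by
      rw [Finsupp.mapDomain]; rfl
    rw [hmap]
    by_cases heq : α = α₀
    · subst heq
      rw [if_pos hm₀.symm, if_pos rfl, hse]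
    · rw [if_neg heq, if_neg (fun hc => heq (Finsupp.mapDomain_injective hτ (hc.trans hm₀)))]
      exact (mul_zero _)
  have hval : coeff m₀ (aeval p Q) = coeff α₀ Q * cβ ^ (Finsupp.degree α₀) := by
    rw [hexp, MvPolynomial.coeff_sum, Finset.sum_congr rfl hterm,
      Finset.sum_ite_eq' _ α₀ _, if_pos hα₀Q]
  rw [hzero] at hval
  simp only [MvPolynomial.coeff_zero] at hval
  exact (mul_ne_zero (MvPolynomial.mem_support_iff.mp hα₀Q) (pow_ne_zero _ hcβ)) hval.symm

end Decomp

end AlgIndepAux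
/-- For the unique multilinear polynomial `g` agreeing with `1/(f' + β)` on the Boolean
hypercube, the coefficient polynomials `{g_{m_S} : ∅ ≠ S ⊆ X_i}` are algebraically
independent over `F` (there are `n - 1` of them, so `alg-rank_{X_i}(g) ≥ n - 1`). -/
theorem algIndep_coeffs_of_multilinear_inverse_fPrime
    {F : Type*} [Field F] (ℓ N n : ℕ) (hn : n = 2 ^ ℓ) (hN : N * ℓ = n)
    (β : F) (hβ0 : β ≠ 0) (hβ1 : β ≠ -1)
    (hunsat : ∀ a : ((Fin N × Fin ℓ) ⊕ Fin n) → F, (∀ v, a v = 0 ∨ a v = 1) →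
        eval a (fPrime F N ℓ n hn) + β ≠ 0)
    (g : MvPolynomial ((Fin N × Fin ℓ) ⊕ Fin n) F)
    (hgml : ∀ v, g.degreeOf v ≤ 1)
    (hg : ∀ a : ((Fin N × Fin ℓ) ⊕ Fin n) → F, (∀ v, a v = 0 ∨ a v = 1) →
        eval a g * (eval a (fPrime F N ℓ n hn) + β) = 1)
    (i : Fin N) :
    AlgebraicIndependent F
      (fun S : {S : Finset (Fin ℓ) // S.Nonempty} => coeffPolyBlock g i S.val) := by
  classical
  rw [algebraicIndependent_iff]
  intro Q hQ0
  by_contra hQ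
  have hcβ : (1+β)⁻¹ - β⁻¹ ≠ 0 := by
    intro hc
    have h2 : (1+β)⁻¹ = β⁻¹ := by linear_combination hc
    have h3 : 1 + β = β := inv_injective h2
    exact one_ne_zero (α := F) (by linear_combination h3)
  exact AlgIndepAux.aeval_ne_zero_of_linear
    (fun S : {S : Finset (Fin ℓ) // S.Nonempty} => (Sum.inr (tEnc hn S.1) :
      (Fin N × Fin ℓ) ⊕ Fin n))
    (fun S T hST => Subtype.ext (AlgIndepAux.tEnc_injective hn (Sum.inr_injective hST)))
    ((1+β)⁻¹ - β⁻¹) hcβ _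
    (fun S => AlgIndepAux.coeff_zero_cpb hn hg S.1 S.2)
    (fun S v => AlgIndepAux.coeff_single_cpb hn hgml hg S.1 S.2 v)
    Q hQ hQ0
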